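/- If -1 < a < 0, |a+b| < 1, and x(k) = a^k x(0) + b v (1-a^k)/(1-a) for a fixed v with |x(0) - v| ≤ δ and |v| ≤ ((1-|a|)/(1-(a+b))) δ, then |x(k) - v| ≤ δ for all k ≥ 0. -/

import Mathlib

theorem stmt_1 (a b δ v x0 : ℝ) (x : ℕ → ℝ)
    (hδ : 0 < δ) (ha0 : -1 < a) (ha1 : a < 0) (hab : |a + b| < 1)
    (hx : ∀ k : ℕ, x k = a ^ k * x0 + b * v * (1 - a ^ k) / (1 - a))
    (hx0 : |x0 - v| ≤ δ) (hv : |v| ≤ (1 - |a|) / (1 - (a + b)) * δ) :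
    ∀ k : ℕ, |x k - v| ≤ δ := by
  intro k
  have h1a : (0:ℝ) < 1 - a := by linarith
  have hab' := abs_lt.mp hab
  have hab1 : (0:ℝ) < 1 - (a + b) := by linarith [hab'.2]
  have habs : |a| = -a := abs_of_neg ha1
  have hakle : |a| ^ k ≤ 1 := pow_le_one₀ (abs_nonneg a) (by rw [habs]; linarith)
  have hakge : -(|a| ^ k) ≤ a ^ k := by
    have := neg_abs_le (a ^ k); rwa [abs_pow] at this
  have hakle' : a ^ k ≤ |a| ^ k := by
    have := le_abs_self (a ^ k); rwa [abs_pow] at this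
  have hknn : 0 ≤ 1 - a ^ k := by linarith
  set c : ℝ := (1 - (a + b)) / (1 - a) with hc
  have hcpos : 0 < c := div_pos hab1 h1a
  have hcmul : c * (1 - a) = 1 - (a + b) := div_mul_cancel₀ _ (ne_of_gt h1a)
  have hxv : x k - v = a ^ k * (x0 - v) - (1 - a ^ k) * c * v := by
    rw [hx k, hc]; field_simp; ring
  have hv' : (1 - (a + b)) * |v| ≤ (1 + a) * δ := by
    rw [habs] at hv
    have : |v| ≤ (1 + a) * δ / (1 - (a + b)) := by
      rw [div_mul_eq_mul_div] at hv; convert hv using 2; ring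
    calc (1 - (a + b)) * |v| ≤ (1 - (a + b)) * ((1 + a) * δ / (1 - (a + b))) := by
          exact mul_le_mul_of_nonneg_left this (le_of_lt hab1)
      _ = (1 + a) * δ := by field_simp
  have htri : |x k - v| ≤ |a| ^ k * δ + (1 - a ^ k) * c * |v| := by
    rw [hxv]
    calc |a ^ k * (x0 - v) - (1 - a ^ k) * c * v|
        ≤ |a ^ k * (x0 - v)| + |(1 - a ^ k) * c * v| := abs_sub _ _
      _ = |a| ^ k * |x0 - v| + (1 - a ^ k) * c * |v| := by
          rw [abs_mul, abs_mul, abs_mul, abs_pow,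
            abs_of_nonneg hknn, abs_of_nonneg (le_of_lt hcpos)]
      _ ≤ |a| ^ k * δ + (1 - a ^ k) * c * |v| := by
          have := mul_le_mul_of_nonneg_left hx0 (pow_nonneg (abs_nonneg a) k)
          linarith
  refine htri.trans ?_
  rcases Nat.eq_zero_or_pos k with rfl | hk
  · simp
  · have hkla : |a| ^ k ≤ |a| := by
      calc |a| ^ k ≤ |a| ^ 1 :=
        pow_le_pow_of_le_one (abs_nonneg a) (by rw [habs]; linarith) hk
      _ = |a| := pow_one _
    have hvnn : 0 ≤ |v| := abs_nonneg v
    have hrw : (1 - a ^ k) * c * |v| * (1 - a) = (1 - a ^ k) * (1 - (a + b)) * |v| := by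
      calc (1 - a ^ k) * c * |v| * (1 - a) = (1 - a ^ k) * |v| * (c * (1 - a)) := by ring
        _ = (1 - a ^ k) * (1 - (a + b)) * |v| := by rw [hcmul]; ring
    have main : (|a| ^ k * δ + (1 - a ^ k) * c * |v|) * (1 - a) ≤ δ * (1 - a) := by
      have h2 : (1 - a ^ k) * ((1 - (a + b)) * |v|) ≤ (1 - a ^ k) * ((1 + a) * δ) :=
        mul_le_mul_of_nonneg_left hv' hknn
      nlinarith [hrw, h2, mul_le_mul_of_nonneg_right hkla hδ.le,
        mul_le_mul_of_nonneg_right hakge hδ.le, habs, hδ]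
    exact (mul_le_mul_iff_of_pos_right h1a).mp main
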